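/- Let X be a Fréchet space (completely metrizable real locally convex space), Y a regular (T₃) real topological vector space, and T : X → Y a continuous linear open surjection which is also bound covering, i.e. for every bounded set B ⊆ Y there is a bounded set C ⊆ X with B ⊆ T(C). If X is Asplund, then Y is Asplund. -/

import Mathlib

open Filter Topology Bornology TopologicalSpace

section Definitions

variable {E : Type*} [AddCommGroup E] [Module ℝ E] [TopologicalSpace E]

/-- A function `f` (thought of as a convex function on an open convex set containing `x₀`)
is Gâteaux differentiable at `x₀` if there is a continuous linear functional `L` such that
for every direction `x` and every `ε > 0` there is `δ > 0` with
`|(f (x₀ + t • x) - f x₀) / t - L x| < ε` whenever `0 < |t| < δ`. -/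
def GateauxDiffAt (f : E → ℝ) (x₀ : E) : Prop :=
  ∃ L : E →L[ℝ] ℝ, ∀ x : E, ∀ ε : ℝ, 0 < ε → ∃ δ : ℝ, 0 < δ ∧ ∀ t : ℝ,
    0 < |t| → |t| < δ → |(f (x₀ + t • x) - f x₀) / t - L x| < ε

/-- A function `f` is Fréchet differentiable at `x₀` if there is a continuous linear
functional `L` such that for every (von Neumann) bounded set `B` and every `ε > 0` there is
`δ > 0` with `|(f (x₀ + t • x) - f x₀) / t - L x| < ε` for all `x ∈ B`, whenever
`0 < |t| < δ`. -/
def FrechetDiffAt (f : E → ℝ) (x₀ : E) : Prop :=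
  ∃ L : E →L[ℝ] ℝ, ∀ B : Set E, IsVonNBounded ℝ B → ∀ ε : ℝ, 0 < ε →
    ∃ δ : ℝ, 0 < δ ∧ ∀ t : ℝ, 0 < |t| → |t| < δ →
      ∀ x ∈ B, |(f (x₀ + t • x) - f x₀) / t - L x| < ε

end Definitions

/-- `E` is Asplund: every continuous convex function on a nonempty open convex set `D`
is Fréchet differentiable at every point of a set which is a dense `Gδ` subset of `D`. -/
def IsAsplund (E : Type*) [AddCommGroup E] [Module ℝ E] [TopologicalSpace E] : Prop :=
  ∀ (D : Set E) (f : E → ℝ), D.Nonempty → IsOpen D → Convex ℝ D →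
    ContinuousOn f D → ConvexOn ℝ D f →
    ∃ G : Set E, G ⊆ D ∧ IsGδ (Subtype.val ⁻¹' G : Set D) ∧
      Dense (Subtype.val ⁻¹' G : Set D) ∧ ∀ x ∈ G, FrechetDiffAt f x

/-- A topological space is completely metrizable if its topology is induced by some complete
metric. -/
def CompletelyMetrizable (X : Type*) [t : TopologicalSpace X] : Prop :=
  ∃ m : MetricSpace X, m.toUniformSpace.toTopologicalSpace = t ∧
    @CompleteSpace X m.toUniformSpace


lemma exists_seq_nat' {α : Type*} (P : ℕ → α → Prop) (R : ℕ → α → α → Prop)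
    (h0 : ∃ a, P 0 a) (hs : ∀ k a, P k a → ∃ b, P (k+1) b ∧ R k a b) :
    ∃ f : ℕ → α, (∀ k, P k (f k)) ∧ (∀ k, R k (f k) (f (k+1))) := by
  obtain ⟨a0, ha0⟩ := h0
  choose g hg1 hg2 using hs
  let F : ∀ k : ℕ, {a : α // P k a} := fun k =>
    Nat.rec (motive := fun k => {a : α // P k a}) ⟨a0, ha0⟩
      (fun k ih => ⟨g k ih.1 ih.2, hg1 k ih.1 ih.2⟩) k
  exact ⟨fun k => (F k).1, fun k => (F k).2, fun k => hg2 k (F k).1 (F k).2⟩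

lemma exists_nat_opens_of_isGδ {α : Type*} [TopologicalSpace α] {Ω s : Set α} (hs : s ⊆ Ω)
    (h : IsGδ ((Subtype.val ⁻¹' s) : Set Ω)) :
    ∃ O : ℕ → Set α, (∀ k, IsOpen (O k)) ∧ s = Ω ∩ ⋂ k, O k := by
  obtain ⟨𝒯, h𝒯o, h𝒯c, h𝒯eq⟩ := h
  rcases Set.eq_empty_or_nonempty 𝒯 with h𝒯 | h𝒯
  · subst h𝒯
    simp only [Set.sInter_empty] at h𝒯eq
    have hΩs : Ω ⊆ s := by
      intro x hx
      have : (⟨x, hx⟩ : Ω) ∈ (Subtype.val ⁻¹' s : Set Ω) := by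
        rw [h𝒯eq]; exact Set.mem_univ _
      exact this
    refine ⟨fun _ => Set.univ, fun _ => isOpen_univ, ?_⟩
    rw [Set.iInter_const, Set.inter_univ]
    exact subset_antisymm hs hΩs
  · obtain ⟨F, hF⟩ := h𝒯c.exists_eq_range h𝒯
    have hex : ∀ k : ℕ, ∃ o : Set α, IsOpen o ∧ Subtype.val ⁻¹' o = F k := by
      intro k
      have : IsOpen (F k) := h𝒯o _ (hF ▸ Set.mem_range_self k)
      rwa [isOpen_induced_iff] at this
    choose O hOo hOe using hex
    have key : (Subtype.val ⁻¹' s : Set Ω) = Subtype.val ⁻¹' (⋂ k, O k) := by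
      rw [h𝒯eq, hF, Set.sInter_range, Set.preimage_iInter]
      exact Set.iInter_congr fun k => (hOe k).symm
    refine ⟨O, hOo, ?_⟩
    ext x
    constructor
    · intro hx
      refine ⟨hs hx, ?_⟩
      have : (⟨x, hs hx⟩ : Ω) ∈ Subtype.val ⁻¹' (⋂ k, O k) := by
        rw [← key]; exact hx
      exact this
    · rintro ⟨hxΩ, hxO⟩
      have : (⟨x, hxΩ⟩ : Ω) ∈ (Subtype.val ⁻¹' s : Set Ω) := by
        rw [key]; exact hxO
      exact this

lemma dense_subtype_iff_closure {α : Type*} [TopologicalSpace α] {Ω s : Set α} (hs : s ⊆ Ω) :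
    Dense ((Subtype.val ⁻¹' s) : Set Ω) ↔ ∀ x ∈ Ω, x ∈ closure s := by
  have himg : (Subtype.val '' (Subtype.val ⁻¹' s : Set Ω)) = s := by
    rw [Set.image_preimage_eq_inter_range, Subtype.range_coe]
    exact Set.inter_eq_self_of_subset_left hs
  constructor
  · intro hd x hx
    have := hd ⟨x, hx⟩
    rw [closure_subtype, himg] at this
    exact this
  · intro h x
    rw [closure_subtype, himg]
    exact h x x.2

section Proj

variable {X Y : Type*} [MetricSpace X] [TopologicalSpace Y]


/-- Invariant for a family of triples `(W, x, r)` at level `k`. -/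
def GoodFamAsp (T : X → Y) (Uk : Set X) (k : ℕ) (A : Set (Set Y × X × ℝ)) : Prop :=
  (∀ e ∈ A, IsOpen e.1 ∧ 0 < e.2.2 ∧ e.2.2 ≤ (1/2 : ℝ)^k ∧
      Metric.closedBall e.2.1 e.2.2 ⊆ Uk ∧ e.1 ⊆ T '' Metric.ball e.2.1 e.2.2) ∧
  (∀ e ∈ A, ∀ e' ∈ A, (e.1 ∩ e'.1).Nonempty → e = e')

lemma exists_refinement_asp (T : X → Y) (hTc : Continuous T) (hTo : IsOpenMap T)
    (Ω Uk : Set X) (hUo : IsOpen Uk) (hUΩ : Uk ⊆ Ω) (hUd : Ω ⊆ closure Uk) (k : ℕ)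
    (R : Set (Set Y × Set X))
    (hR : ∀ p ∈ R, IsOpen p.1 ∧ IsOpen p.2 ∧ p.2 ⊆ Ω ∧ p.1 ⊆ T '' p.2) :
    ∃ A, GoodFamAsp T Uk k A ∧
      (∀ e ∈ A, ∃ p ∈ R, e.1 ⊆ p.1 ∧ Metric.closedBall e.2.1 e.2.2 ⊆ p.2) ∧
      (⋃ p ∈ R, p.1) ⊆ closure (⋃ e ∈ A, e.1) := by
  classical
  set S : Set (Set (Set Y × X × ℝ)) :=
    {A | GoodFamAsp T Uk k A ∧
      ∀ e ∈ A, ∃ p ∈ R, e.1 ⊆ p.1 ∧ Metric.closedBall e.2.1 e.2.2 ⊆ p.2} with hS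
  have hchain : ∀ c ⊆ S, IsChain (· ⊆ ·) c → ∃ ub ∈ S, ∀ s ∈ c, s ⊆ ub := by
    intro c hc hchain
    refine ⟨⋃₀ c, ⟨⟨?_, ?_⟩, ?_⟩, fun s hs => Set.subset_sUnion_of_mem hs⟩
    · rintro e ⟨A, hA, heA⟩
      exact (hc hA).1.1 e heA
    · rintro e ⟨A, hA, heA⟩ e' ⟨A', hA', heA'⟩
      rcases hchain.total hA hA' with h | h
      · exact (hc hA').1.2 e (h heA) e' heA'
      · exact (hc hA).1.2 e heA e' (h heA')
    · rintro e ⟨A, hA, heA⟩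
      exact (hc hA).2 e heA
  obtain ⟨A, hAS, hAm⟩ := zorn_subset S hchain
  refine ⟨A, hAS.1, hAS.2, ?_⟩
  rintro y hy
  rw [_root_.mem_closure_iff]
  intro o ho hyo
  by_contra hcon
  rw [Set.not_nonempty_iff_eq_empty] at hcon
  simp only [Set.mem_iUnion] at hy
  obtain ⟨p, hpR, hyp⟩ := hy
  obtain ⟨hp1o, hp2o, hp2Ω, hp12⟩ := hR p hpR
  obtain ⟨x₀, hx₀p, hTx₀⟩ := hp12 hyp
  set P' : Set X := T ⁻¹' (o ∩ p.1) ∩ p.2 with hP'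
  have hP'open : IsOpen P' := ((ho.inter hp1o).preimage hTc).inter hp2o
  have hx₀P : x₀ ∈ P' := ⟨by rw [Set.mem_preimage, hTx₀]; exact ⟨hyo, hyp⟩, hx₀p⟩
  have hx₀cl : x₀ ∈ closure Uk := hUd (hp2Ω hx₀p)
  obtain ⟨x₁, hx₁P, hx₁U⟩ := (_root_.mem_closure_iff.1 hx₀cl) P' hP'open hx₀P
  obtain ⟨ε, hε, hballε⟩ := Metric.isOpen_iff.1 (hUo.inter hP'open) x₁ ⟨hx₁U, hx₁P⟩
  set r : ℝ := min (ε/2) ((1/2 : ℝ)^k) with hrdef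
  have hr0 : 0 < r := lt_min (by linarith) (by positivity)
  have hrε : r < ε := lt_of_le_of_lt (min_le_left _ _) (by linarith)
  have hcb : Metric.closedBall x₁ r ⊆ Uk ∩ P' :=
    (Metric.closedBall_subset_ball hrε).trans hballε
  set e : Set Y × X × ℝ := (T '' Metric.ball x₁ r ∩ (o ∩ p.1), x₁, r) with he
  have hTx₁ : T x₁ ∈ e.1 := ⟨⟨x₁, Metric.mem_ball_self hr0, rfl⟩, hx₁P.1⟩
  have hdisj : ∀ e' ∈ A, (e.1 ∩ e'.1) = ∅ := by
    intro e' he'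
    apply Set.eq_empty_of_subset_empty
    rw [← hcon]
    rintro z ⟨hz1, hz2⟩
    exact ⟨hz1.2.1, Set.mem_biUnion he' hz2⟩
  have hnew : (insert e A) ∈ S := by
    refine ⟨⟨?_, ?_⟩, ?_⟩
    · intro e' he'
      rcases Set.mem_insert_iff.1 he' with rfl | he'
      · exact ⟨(hTo _ Metric.isOpen_ball).inter (ho.inter hp1o), hr0, min_le_right _ _,
          hcb.trans Set.inter_subset_left, Set.inter_subset_left⟩
      · exact hAS.1.1 e' he'
    · intro e₁ he₁ e₂ he₂ hne
      rcases Set.mem_insert_iff.1 he₁ with rfl | h₁ <;>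
        rcases Set.mem_insert_iff.1 he₂ with rfl | h₂
      · rfl
      · exact absurd hne (by rw [hdisj e₂ h₂]; exact Set.not_nonempty_empty)
      · exfalso
        obtain ⟨z, hz1, hz2⟩ := hne
        have hz : z ∈ e.1 ∩ e₁.1 := ⟨hz2, hz1⟩
        rw [hdisj e₁ h₁] at hz
        exact hz
      · exact hAS.1.2 e₁ h₁ e₂ h₂ hne
    · intro e' he'
      rcases Set.mem_insert_iff.1 he' with rfl | he'
      · exact ⟨p, hpR, Set.inter_subset_right.trans Set.inter_subset_right,
          (hcb.trans Set.inter_subset_right).trans Set.inter_subset_right⟩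
      · exact hAS.2 e' he'
  have hins : insert e A ⊆ A := hAm hnew (Set.subset_insert e A)
  have heA : e ∈ A := hins (Set.mem_insert e A)
  have : T x₁ ∈ o ∩ ⋃ e' ∈ A, e'.1 := ⟨hTx₁.2.1, Set.mem_biUnion heA hTx₁⟩
  rw [hcon] at this
  exact this

lemma proj_lemma_asp [CompleteSpace X] [T1Space Y]
    (T : X → Y) (hTc : Continuous T) (hTo : IsOpenMap T)
    (Ω : Set X) (hΩ : IsOpen Ω)
    (U : ℕ → Set X) (hUo : ∀ k, IsOpen (U k)) (hUΩ : ∀ k, U k ⊆ Ω)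
    (hUd : ∀ k, Ω ⊆ closure (U k)) :
    ∃ V : ℕ → Set Y, (∀ k, IsOpen (V k)) ∧ (∀ k, V k ⊆ T '' Ω) ∧
      (∀ y ∈ T '' Ω, y ∈ closure (⋂ k, V k)) ∧
      (∀ y ∈ ⋂ k, V k, ∃ x, (∀ k, x ∈ U k) ∧ T x = y) := by
  classical
  set P : ℕ → Set (Set Y × X × ℝ) → Prop := fun k A =>
    GoodFamAsp T (U k) k A ∧ T '' Ω ⊆ closure (⋃ e ∈ A, e.1) with hPdef
  set Rel : ℕ → Set (Set Y × X × ℝ) → Set (Set Y × X × ℝ) → Prop := fun _ A B =>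
    ∀ e ∈ B, ∃ e' ∈ A, e.1 ⊆ e'.1 ∧
      Metric.closedBall e.2.1 e.2.2 ⊆ Metric.ball e'.2.1 e'.2.2 with hReldef
  have h0 : ∃ A, P 0 A := by
    have hRc : ∀ p ∈ ({(T '' Ω, Ω)} : Set (Set Y × Set X)),
        IsOpen p.1 ∧ IsOpen p.2 ∧ p.2 ⊆ Ω ∧ p.1 ⊆ T '' p.2 := by
      intro p hp
      rw [Set.mem_singleton_iff] at hp
      subst hp
      exact ⟨hTo _ hΩ, hΩ, subset_rfl, subset_rfl⟩
    obtain ⟨A, hg, _, hd⟩ := exists_refinement_asp T hTc hTo Ω (U 0) (hUo 0) (hUΩ 0) (hUd 0) 0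
      {(T '' Ω, Ω)} hRc
    refine ⟨A, hg, subset_trans ?_ hd⟩
    intro z hz
    simp only [Set.mem_iUnion]
    exact ⟨(T '' Ω, Ω), Set.mem_singleton _, hz⟩
  have hstep : ∀ k A, P k A → ∃ B, P (k+1) B ∧ Rel k A B := by
    rintro k A ⟨hg, hd⟩
    have hRc : ∀ p ∈ ((fun e => (e.1, Metric.ball e.2.1 e.2.2)) '' A :
        Set (Set Y × Set X)), IsOpen p.1 ∧ IsOpen p.2 ∧ p.2 ⊆ Ω ∧ p.1 ⊆ T '' p.2 := by
      rintro pp ⟨e, he, rfl⟩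
      obtain ⟨ho1, hr0, hrb, hcb, hw⟩ := hg.1 e he
      exact ⟨ho1, Metric.isOpen_ball,
        (Metric.ball_subset_closedBall.trans hcb).trans (hUΩ k), hw⟩
    obtain ⟨B, hg', hpar, hd'⟩ := exists_refinement_asp T hTc hTo Ω (U (k+1)) (hUo (k+1))
      (hUΩ (k+1)) (hUd (k+1)) (k+1) ((fun e => (e.1, Metric.ball e.2.1 e.2.2)) '' A) hRc
    refine ⟨B, ⟨hg', ?_⟩, ?_⟩
    · have h1 : (⋃ e ∈ A, e.1) ⊆ closure (⋃ e ∈ B, e.1) := by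
        refine subset_trans ?_ hd'
        intro z hz
        simp only [Set.mem_iUnion] at hz ⊢
        obtain ⟨e, he, hze⟩ := hz
        exact ⟨(e.1, Metric.ball e.2.1 e.2.2), ⟨e, he, rfl⟩, hze⟩
      calc T '' Ω ⊆ closure (⋃ e ∈ A, e.1) := hd
        _ ⊆ closure (closure (⋃ e ∈ B, e.1)) := closure_mono h1
        _ = closure (⋃ e ∈ B, e.1) := closure_closure
    · intro e heB
      obtain ⟨pp, hppR, h1, h2⟩ := hpar e heB
      obtain ⟨e', he', rfl⟩ := hppR
      exact ⟨e', he', h1, h2⟩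
  obtain ⟨A, hPA, hRelA⟩ := exists_seq_nat' P Rel h0 hstep
  set V : ℕ → Set Y := fun k => ⋃ e ∈ A k, e.1 with hV
  have hVo : ∀ k, IsOpen (V k) := fun k =>
    isOpen_biUnion (fun e he => ((hPA k).1.1 e he).1)
  have hVsub : ∀ k, V k ⊆ T '' Ω := by
    intro k
    refine Set.iUnion₂_subset fun e he => ?_
    obtain ⟨_, _, _, hcb, hw⟩ := (hPA k).1.1 e he
    exact hw.trans (Set.image_mono
      ((Metric.ball_subset_closedBall.trans hcb).trans (hUΩ k)))
  have hVd : ∀ k, T '' Ω ⊆ closure (V k) := fun k => (hPA k).2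
  refine ⟨V, hVo, hVsub, ?_, ?_⟩
  · -- density of the intersection, via Baire on X
    set W : ℕ → Set X := fun k => (T ⁻¹' (V k) ∩ Ω) ∪ (closure Ω)ᶜ with hW
    have hWo : ∀ k, IsOpen (W k) :=
      fun k => (((hVo k).preimage hTc).inter hΩ).union isClosed_closure.isOpen_compl
    have hWd : ∀ k, Dense (W k) := by
      intro k
      rw [dense_iff_inter_open]
      rintro Q hQ ⟨q, hq⟩
      by_cases hQΩ : (Q ∩ Ω).Nonempty
      · obtain ⟨q₀, hq₀Q, hq₀Ω⟩ := hQΩ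
        have h1 : T q₀ ∈ closure (V k) := hVd k ⟨q₀, hq₀Ω, rfl⟩
        obtain ⟨y', hy'1, hy'2⟩ :=
          (_root_.mem_closure_iff.1 h1) (T '' (Q ∩ Ω)) (hTo _ (hQ.inter hΩ))
            ⟨q₀, ⟨hq₀Q, hq₀Ω⟩, rfl⟩
        obtain ⟨q', hq', hq'T⟩ := hy'1
        exact ⟨q', hq'.1, Or.inl ⟨by rw [Set.mem_preimage, hq'T]; exact hy'2, hq'.2⟩⟩
      · rw [Set.not_nonempty_iff_eq_empty] at hQΩ
        have hnotsub : ¬ Q ⊆ closure Ω := by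
          intro hsub
          have := (_root_.mem_closure_iff.1 (hsub hq)) Q hQ hq
          rw [hQΩ] at this
          exact Set.not_nonempty_empty this
        obtain ⟨q'', hq''Q, hq''⟩ := Set.not_subset.1 hnotsub
        exact ⟨q'', hq''Q, Or.inr hq''⟩
    have hdense : Dense (⋂ k, W k) := dense_iInter_of_isOpen hWo hWd
    rintro y ⟨x₀, hx₀Ω, rfl⟩
    rw [_root_.mem_closure_iff]
    intro o ho hyo
    have hPne : (T ⁻¹' o ∩ Ω).Nonempty := ⟨x₀, hyo, hx₀Ω⟩
    obtain ⟨x', hx'1, hx'2⟩ := hdense.inter_open_nonempty _ ((ho.preimage hTc).inter hΩ) hPne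
    refine ⟨T x', hx'1.1, ?_⟩
    rw [Set.mem_iInter]
    intro k
    rcases Set.mem_iInter.1 hx'2 k with h | h
    · exact h.1
    · exact absurd (subset_closure hx'1.2) h
  · -- every point of the intersection has a fiber point in ⋂ U k
    intro y hy
    have hy' : ∀ k, ∃ e, e ∈ A k ∧ y ∈ e.1 := by
      intro k
      have hk := Set.mem_iInter.1 hy k
      simp only [hV, Set.mem_iUnion] at hk
      obtain ⟨e, he, hye⟩ := hk
      exact ⟨e, he, hye⟩
    choose e he hye using hy'
    have hprop : ∀ k, IsOpen (e k).1 ∧ 0 < (e k).2.2 ∧ (e k).2.2 ≤ (1/2:ℝ)^k ∧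
        Metric.closedBall (e k).2.1 (e k).2.2 ⊆ U k ∧
        (e k).1 ⊆ T '' Metric.ball (e k).2.1 (e k).2.2 :=
      fun k => (hPA k).1.1 (e k) (he k)
    have hnest : ∀ k, Metric.closedBall (e (k+1)).2.1 (e (k+1)).2.2 ⊆
        Metric.ball (e k).2.1 (e k).2.2 := by
      intro k
      obtain ⟨e', he', hsub1, hsub2⟩ := hRelA k (e (k+1)) (he (k+1))
      have heq : e' = e k := (hPA k).1.2 e' he' (e k) (he k) ⟨y, hsub1 (hye (k+1)), hye k⟩
      rwa [heq] at hsub2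
    set x : ℕ → X := fun k => (e k).2.1 with hx
    set r : ℕ → ℝ := fun k => (e k).2.2 with hr
    have hxmem : ∀ k, x (k+1) ∈ Metric.ball (x k) (r k) :=
      fun k => hnest k (Metric.mem_closedBall_self (le_of_lt (hprop (k+1)).2.1))
    have hcauchy : CauchySeq x := by
      apply cauchySeq_of_le_geometric (1/2 : ℝ) 1 (by norm_num)
      intro n
      rw [dist_comm, one_mul]
      exact le_trans (le_of_lt (Metric.mem_ball.1 (hxmem n))) (hprop n).2.2.1
    obtain ⟨xs, hxs⟩ := cauchySeq_tendsto_of_complete hcauchy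
    have hcbnest : ∀ k j, k ≤ j →
        Metric.closedBall (x j) (r j) ⊆ Metric.closedBall (x k) (r k) := by
      intro k j hkj
      induction j, hkj using Nat.le_induction with
      | base => exact subset_rfl
      | succ j hkj ih => exact ((hnest j).trans Metric.ball_subset_closedBall).trans ih
    have hxscb : ∀ k, xs ∈ Metric.closedBall (x k) (r k) := by
      intro k
      refine Metric.isClosed_closedBall.mem_of_tendsto hxs ?_
      refine eventually_atTop.2 ⟨k, fun j hj => ?_⟩
      exact hcbnest k j hj (Metric.mem_closedBall_self (le_of_lt (hprop j).2.1))
    refine ⟨xs, fun k => (hprop k).2.2.2.1 (hxscb k), ?_⟩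
    have hz : ∀ k, ∃ z, z ∈ Metric.ball (x k) (r k) ∧ T z = y := by
      intro k
      obtain ⟨z, hz1, hz2⟩ := (hprop k).2.2.2.2 (hye k)
      exact ⟨z, hz1, hz2⟩
    choose z hz1 hz2 using hz
    have hztend : Tendsto z atTop (𝓝 xs) := by
      rw [tendsto_iff_dist_tendsto_zero]
      apply squeeze_zero (g := fun k => 2 * (1/2:ℝ)^k) (fun k => dist_nonneg) ?_ ?_
      · intro k
        have h1 : dist (z k) (x k) ≤ (1/2:ℝ)^k :=
          le_trans (le_of_lt (Metric.mem_ball.1 (hz1 k))) (hprop k).2.2.1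
        have h2 : dist (x k) xs ≤ (1/2:ℝ)^k := by
          rw [dist_comm]
          exact le_trans (Metric.mem_closedBall.1 (hxscb k)) (hprop k).2.2.1
        calc dist (z k) xs ≤ dist (z k) (x k) + dist (x k) xs := dist_triangle _ _ _
          _ ≤ 2 * (1/2:ℝ)^k := by linarith
      · have := (tendsto_pow_atTop_nhds_zero_of_lt_one
          (by norm_num : (0:ℝ) ≤ 1/2) (by norm_num : (1/2:ℝ) < 1)).const_mul (2:ℝ)
        simpa using this
    have hfib : xs ∈ T ⁻¹' ({y} : Set Y) := by
      refine (isClosed_singleton.preimage hTc).mem_of_tendsto hztend ?_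
      exact Eventually.of_forall (fun k => by simp [hz2 k])
    simpa using hfib

end Proj

lemma frechet_transfer_asp {X Y : Type*} [AddCommGroup X] [Module ℝ X] [TopologicalSpace X]
    [ContinuousSMul ℝ X] [AddCommGroup Y] [Module ℝ Y] [TopologicalSpace Y]
    (T : X →L[ℝ] Y) (hTopen : IsOpenMap T) (hTsurj : Function.Surjective T)
    (hTbc : ∀ B : Set Y, IsVonNBounded ℝ B → ∃ C : Set X, IsVonNBounded ℝ C ∧ B ⊆ T '' C)
    (f : Y → ℝ) (x : X) (h : FrechetDiffAt (fun x => f (T x)) x) :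
    FrechetDiffAt f (T x) := by
  obtain ⟨L, hL⟩ := h
  have hker : ∀ v : X, T v = 0 → L v = 0 := by
    intro v hv
    by_contra hne
    obtain ⟨δ, hδ, hδ'⟩ := hL {v} (Bornology.isVonNBounded_singleton v) |L v| (abs_pos.2 hne)
    have hpos : (0:ℝ) < δ/2 := by linarith
    have ht : (0:ℝ) < |δ/2| := by rw [abs_of_pos hpos]; linarith
    have ht' : |δ/2| < δ := by rw [abs_of_pos hpos]; linarith
    have hcontr := hδ' (δ/2) ht ht' v rfl
    have hTe : T (x + (δ/2) • v) = T x := by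
      rw [map_add, map_smul, hv, smul_zero, add_zero]
    simp only [hTe, sub_self, zero_div, zero_sub, abs_neg] at hcontr
    exact lt_irrefl _ hcontr
  set σ : Y → X := Function.surjInv hTsurj with hσ
  have hσT : ∀ y, T (σ y) = y := Function.surjInv_eq hTsurj
  have hkey : ∀ x' : X, L (σ (T x')) = L x' := by
    intro x'
    have h0 : T (σ (T x') - x') = 0 := by rw [map_sub, hσT, sub_self]
    have hk := hker _ h0
    rw [map_sub] at hk
    linarith
  set M0 : Y → ℝ := fun y => L (σ y) with hM0
  have hadd : ∀ a b, M0 (a + b) = M0 a + M0 b := by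
    intro a b
    have h0 : T (σ (a+b) - σ a - σ b) = 0 := by
      rw [map_sub, map_sub, hσT, hσT, hσT]; abel
    have hk := hker _ h0
    rw [map_sub, map_sub] at hk
    simp only [hM0]
    linarith
  have hsmul : ∀ (c : ℝ) (a : Y), M0 (c • a) = c * M0 a := by
    intro c a
    have h0 : T (σ (c • a) - c • σ a) = 0 := by
      rw [map_sub, map_smul, hσT, hσT, sub_self]
    have hk := hker _ h0
    rw [map_sub, map_smul] at hk
    simp only [hM0, smul_eq_mul] at hk ⊢
    linarith
  have hcont : Continuous M0 := by
    rw [continuous_def]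
    intro Uo hUo
    have himg : M0 ⁻¹' Uo = ⇑T '' (⇑L ⁻¹' Uo) := by
      ext y
      constructor
      · intro hy
        exact ⟨σ y, hy, hσT y⟩
      · rintro ⟨x', hx', rfl⟩
        show L (σ (T x')) ∈ Uo
        rw [hkey]
        exact hx'
    rw [himg]
    exact hTopen _ (hUo.preimage L.continuous)
  let Mlin : Y →ₗ[ℝ] ℝ :=
    { toFun := M0, map_add' := hadd, map_smul' := fun c a => by simpa using hsmul c a }
  let M : Y →L[ℝ] ℝ := { toLinearMap := Mlin, cont := hcont }
  refine ⟨M, ?_⟩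
  intro B hB ε hε
  obtain ⟨C, hC, hBC⟩ := hTbc B hB
  obtain ⟨δ, hδ, hδ'⟩ := hL C hC ε hε
  refine ⟨δ, hδ, ?_⟩
  intro t ht ht' y' hy'
  obtain ⟨c, hc, rfl⟩ := hBC hy'
  have hq := hδ' t ht ht' c hc
  have hTe : T (x + t • c) = T x + t • T c := by rw [map_add, map_smul]
  have hMc : (M (T c) : ℝ) = L c := hkey c
  simp only [hTe] at hq
  rw [hMc]
  exact hq

/-- If `X` is a Fréchet space (completely metrizable real locally convex space), `Y` a regular
(T₃) real topological vector space, and `T : X → Y` a continuous linear open surjection which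
is bound covering (every bounded `B ⊆ Y` satisfies `B ⊆ T '' C` for some bounded `C ⊆ X`),
then `X` Asplund implies `Y` Asplund. -/
theorem asplund_of_boundCovering_openSurjection (X Y : Type*) [AddCommGroup X] [Module ℝ X]
    [TopologicalSpace X] [IsTopologicalAddGroup X] [ContinuousSMul ℝ X]
    [LocallyConvexSpace ℝ X] [T2Space X] (hX : CompletelyMetrizable X)
    [AddCommGroup Y] [Module ℝ Y] [TopologicalSpace Y] [IsTopologicalAddGroup Y]
    [ContinuousSMul ℝ Y] [T3Space Y]
    (T : X →L[ℝ] Y) (hTopen : IsOpenMap T) (hTsurj : Function.Surjective T)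
    (hTbc : ∀ B : Set Y, IsVonNBounded ℝ B → ∃ C : Set X, IsVonNBounded ℝ C ∧ B ⊆ T '' C)
    (hASP : IsAsplund X) :
    IsAsplund Y := by
  obtain ⟨m, hm, hcomp⟩ := hX
  subst hm
  intro D f hDne hDo hDc hfc hfcv
  set Ω : Set X := ⇑T ⁻¹' D with hΩdef
  have hΩo : IsOpen Ω := hDo.preimage T.continuous
  have hΩne : Ω.Nonempty := by
    obtain ⟨y, hy⟩ := hDne
    obtain ⟨x, rfl⟩ := hTsurj y
    exact ⟨x, hy⟩
  have hΩc : Convex ℝ Ω := by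
    intro a ha b hb s t hs ht hst
    show T (s • a + t • b) ∈ D
    rw [map_add, map_smul, map_smul]
    exact hDc ha hb hs ht hst
  have himg : ⇑T '' Ω = D := Set.image_preimage_eq D hTsurj
  set g : X → ℝ := fun x => f (T x) with hgdef
  have hgc : ContinuousOn g Ω := hfc.comp T.continuous.continuousOn (fun x hx => hx)
  have hgcv : ConvexOn ℝ Ω g := by
    refine ⟨hΩc, ?_⟩
    intro a ha b hb s t hs ht hst
    simp only [hgdef, map_add, map_smul]
    exact hfcv.2 ha hb hs ht hst
  obtain ⟨GX, hGXsub, hGXgδ, hGXd, hGXdiff⟩ := hASP Ω g hΩne hΩo hΩc hgc hgcv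
  obtain ⟨O, hOo, hGXeq⟩ := exists_nat_opens_of_isGδ hGXsub hGXgδ
  have hGXd' : ∀ x ∈ Ω, x ∈ closure GX := (dense_subtype_iff_closure hGXsub).1 hGXd
  set U : ℕ → Set X := fun k => Ω ∩ O k with hUdef
  have hUo : ∀ k, IsOpen (U k) := fun k => hΩo.inter (hOo k)
  have hUΩ : ∀ k, U k ⊆ Ω := fun _ => Set.inter_subset_left
  have hGXU : ∀ k, GX ⊆ U k := by
    intro k x hx
    rw [hGXeq] at hx
    exact ⟨hx.1, Set.mem_iInter.1 hx.2 k⟩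
  have hUd : ∀ k, Ω ⊆ closure (U k) :=
    fun k x hx => closure_mono (hGXU k) (hGXd' x hx)
  have hUiInter : (⋂ k, U k) = GX := by
    rw [hGXeq, hUdef]
    exact (Set.inter_iInter Ω O).symm
  have hTc : Continuous ⇑T := T.continuous
  have hTo : IsOpenMap ⇑T := hTopen
  obtain ⟨V, hVo, hVsub, hVd, hVfib⟩ :=
    @proj_lemma_asp X Y m ‹TopologicalSpace Y› hcomp inferInstance
      (⇑T) hTc hTo Ω hΩo U hUo hUΩ hUd
  rw [himg] at hVsub hVd
  set G : Set Y := ⋂ k, V k with hGdef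
  have hGsub : G ⊆ D := (Set.iInter_subset V 0).trans (hVsub 0)
  refine ⟨G, hGsub, ?_, ?_, ?_⟩
  · have hpre : (Subtype.val ⁻¹' G : Set D) = ⋂ k, (Subtype.val ⁻¹' (V k) : Set D) := by
      rw [hGdef, Set.preimage_iInter]
    rw [hpre]
    exact IsGδ.iInter (fun k => ((hVo k).preimage continuous_subtype_val).isGδ)
  · exact (dense_subtype_iff_closure hGsub).2 hVd
  · intro y hy
    obtain ⟨x, hxU, hTx⟩ := hVfib y hy
    have hxGX : x ∈ GX := by
      rw [← hUiInter]
      exact Set.mem_iInter.2 hxU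
    have hdiffg := hGXdiff x hxGX
    rw [← hTx]
    exact frechet_transfer_asp T hTopen hTsurj hTbc f x hdiffg
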